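/- arXiv:2504.07412 — 2 statements merged into one kernel-verified Lean document; each statement's English description precedes it below -/
import Mathlib

section
/- Let R be a commutative ring containing invertible elements P_1, …, P_n and elements Q_1, …, Q_{n-1} and y, with the conventions P_0 = 1 and Q_0 = 0. Define the Toda polynomials T^{(m)}_k = Σ_{0 = i_0 < i_1 < ⋯ < i_k ≤ m} ∏_{s=1}^{k} (P_{i_s}/P_{i_s − 1}) · (1 − Q_{i_s − 1})^{1 − δ_{i_s − i_{s-1}, 1}} for 1 ≤ k ≤ m, T^{(m)}_0 = 1, and set T^{(m)}(y) = Σ_{k=0}^{m} T^{(m)}_k y^k. Then T^{(n)}(y) equals the tridiagonal determinant D(1 + y·P_1/P_0, 1 + y·P_2/P_1, …, 1 + y·P_n/P_{n-1}; y·(P_2/P_1)·Q_1, y·(P_3/P_2)·Q_2, …, y·(P_n/P_{n-1})·Q_{n-1}). -/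
open Finset
open scoped Classical

/-- The tridiagonal determinant `D(A_0, …, A_{m-1}; B_1, …, B_{m-1})` of size `m`:
the determinant of the `m × m` matrix whose diagonal entries are `A 0, …, A (m-1)`,
whose superdiagonal entry in position `(i, i+1)` is `B (i+1)`, whose subdiagonal
entries all equal `1`, and all of whose other entries are `0`. -/
noncomputable def triDet {R : Type*} [CommRing R] (m : ℕ) (A B : ℕ → R) : R :=
  Matrix.det (Matrix.of fun i j : Fin m =>
    if (i : ℕ) = (j : ℕ) then A i
    else if (i : ℕ) + 1 = (j : ℕ) then B j
    else if (j : ℕ) + 1 = (i : ℕ) then 1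
    else 0)

/-- The summand of the Toda polynomial `T^{(m)}_k` associated to a strictly
increasing sequence `0 = i_0 < i_1 < ⋯ < i_k ≤ m` (encoded as a strictly
monotone function `f : Fin (k+1) → Fin (m+1)` with `f 0 = 0`). -/
noncomputable def todaTerm {R : Type*} [CommRing R] (P : ℕ → Rˣ) (Q : ℕ → R)
    {m k : ℕ} (f : Fin (k + 1) → Fin (m + 1)) : R :=
  ∏ s : Fin k,
    (((P (f s.succ) * (P ((f s.succ : ℕ) - 1))⁻¹ : Rˣ) : R) *
      (if (f s.succ : ℕ) - (f s.castSucc : ℕ) = 1 then 1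
       else 1 - Q ((f s.succ : ℕ) - 1)))

/-- The Toda polynomial
`T^{(m)}_k = Σ_{0 = i_0 < i_1 < ⋯ < i_k ≤ m} ∏_{s=1}^{k}
  (P_{i_s}/P_{i_s - 1}) · (1 - Q_{i_s - 1})^{1 - δ_{i_s - i_{s-1}, 1}}`,
with `T^{(m)}_0 = 1`. -/
noncomputable def todaT {R : Type*} [CommRing R] (P : ℕ → Rˣ) (Q : ℕ → R)
    (m k : ℕ) : R :=
  ∑ f ∈ Finset.univ.filter
      (fun f : Fin (k + 1) → Fin (m + 1) => StrictMono f ∧ f 0 = 0),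
    todaTerm P Q f

/-- `T^{(m)}(y) = Σ_{k=0}^{m} T^{(m)}_k y^k`. -/
noncomputable def todaPoly {R : Type*} [CommRing R] (P : ℕ → Rˣ) (Q : ℕ → R)
    (m : ℕ) (y : R) : R :=
  ∑ k ∈ Finset.range (m + 1), todaT P Q m k * y ^ k


section Aux
variable {R : Type*} [CommRing R]

noncomputable def wgt (P : ℕ → Rˣ) (Q : ℕ → R) (y : R) (S : Finset ℕ) : R :=
  ∏ j ∈ S, (y * ((P j * (P (j - 1))⁻¹ : Rˣ) : R) *
    (if j - 1 ∈ S ∨ j = 1 then 1 else 1 - Q (j - 1)))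

noncomputable def Fsum (P : ℕ → Rˣ) (Q : ℕ → R) (y : R) (m : ℕ) : R :=
  ∑ S ∈ (Finset.Icc 1 m).powerset, wgt P Q y S

lemma Icc_one_succ (m : ℕ) : Finset.Icc 1 (m + 1) = insert (m + 1) (Finset.Icc 1 m) := by
  ext x; simp [Finset.mem_Icc, Finset.mem_insert]; omega

lemma wgt_insert (P : ℕ → Rˣ) (Q : ℕ → R) (y : R) {m : ℕ} {S : Finset ℕ}
    (hS : S ⊆ Finset.Icc 1 (m + 1)) :
    wgt P Q y (insert (m + 2) S) =
      wgt P Q y S * (y * ((P (m + 2) * (P (m + 1))⁻¹ : Rˣ) : R) *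
        (if m + 1 ∈ S then 1 else 1 - Q (m + 1))) := by
  have hmem : m + 2 ∉ S := fun h => by have := hS h; simp [Finset.mem_Icc] at this
  have e1 : m + 2 - 1 = m + 1 := by omega
  have hcond : (m + 1 ∈ insert (m + 2) S ∨ m + 2 = 1) ↔ m + 1 ∈ S := by
    simp only [Finset.mem_insert]
    constructor
    · rintro ((h | h) | h)
      · omega
      · exact h
      · omega
    · intro h; exact Or.inl (Or.inr h)
  have hfac : (if (m + 2) - 1 ∈ insert (m + 2) S ∨ m + 2 = 1 then (1 : R)
      else 1 - Q ((m + 2) - 1)) = (if m + 1 ∈ S then 1 else 1 - Q (m + 1)) := by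
    rw [e1]
    by_cases h : m + 1 ∈ S
    · rw [if_pos (hcond.mpr h), if_pos h]
    · rw [if_neg (fun hc => h (hcond.mp hc)), if_neg h]
  have hprod : ∀ j ∈ S,
      (y * ((P j * (P (j - 1))⁻¹ : Rˣ) : R) *
        (if j - 1 ∈ insert (m + 2) S ∨ j = 1 then 1 else 1 - Q (j - 1))) =
      (y * ((P j * (P (j - 1))⁻¹ : Rˣ) : R) *
        (if j - 1 ∈ S ∨ j = 1 then 1 else 1 - Q (j - 1))) := by
    intro j hj
    have hjm : 1 ≤ j ∧ j ≤ m + 1 := Finset.mem_Icc.mp (hS hj)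
    have hc : (j - 1 ∈ insert (m + 2) S ∨ j = 1) ↔ (j - 1 ∈ S ∨ j = 1) := by
      simp only [Finset.mem_insert]
      constructor
      · rintro ((h | h) | h)
        · omega
        · exact Or.inl h
        · exact Or.inr h
      · rintro (h | h)
        · exact Or.inl (Or.inr h)
        · exact Or.inr h
    simp only [hc]
  unfold wgt
  rw [Finset.prod_insert hmem, hfac, Finset.prod_congr rfl hprod, mul_comm, e1]

lemma Fsum_rec (P : ℕ → Rˣ) (Q : ℕ → R) (y : R) (m : ℕ) :
    Fsum P Q y (m + 2) =
      (1 + y * ((P (m + 2) * (P (m + 1))⁻¹ : Rˣ) : R)) * Fsum P Q y (m + 1) -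
        y * ((P (m + 2) * (P (m + 1))⁻¹ : Rˣ) : R) * Q (m + 1) * Fsum P Q y m := by
  classical
  set r : R := ((P (m + 2) * (P (m + 1))⁻¹ : Rˣ) : R) with hr
  have hnm : (m + 2) ∉ Finset.Icc 1 (m + 1) := by simp
  have hstep : Finset.Icc 1 (m + 2) = insert (m + 2) (Finset.Icc 1 (m + 1)) :=
    Icc_one_succ (m + 1)
  rw [Fsum, hstep, Finset.sum_powerset_insert hnm]
  have key : ∀ S ∈ (Finset.Icc 1 (m + 1)).powerset,
      wgt P Q y (insert (m + 2) S) =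
        wgt P Q y S * (y * r) - wgt P Q y S * (y * r * Q (m + 1)) *
          (if m + 1 ∈ S then 0 else 1) := by
    intro S hS
    rw [wgt_insert P Q y (Finset.mem_powerset.mp hS), ← hr]
    by_cases h : m + 1 ∈ S
    · rw [if_pos h, if_pos h]; ring
    · rw [if_neg h, if_neg h]; ring
  rw [Finset.sum_congr rfl key, Finset.sum_sub_distrib]
  have h2 : ∑ S ∈ (Finset.Icc 1 (m + 1)).powerset,
      wgt P Q y S * (y * r * Q (m + 1)) * (if m + 1 ∈ S then 0 else 1) =
      (y * r * Q (m + 1)) * Fsum P Q y m := by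
    rw [Fsum, Icc_one_succ m, Finset.sum_powerset_insert (by simp)]
    have : ∀ S ∈ (Finset.Icc 1 m).powerset,
        wgt P Q y (insert (m + 1) S) * (y * r * Q (m + 1)) *
          (if m + 1 ∈ insert (m + 1) S then 0 else 1) = 0 := by
      intro S _; simp
    rw [Finset.sum_congr rfl this, Finset.sum_const_zero, add_zero, Finset.mul_sum]
    apply Finset.sum_congr rfl
    intro S hS
    have : m + 1 ∉ S := fun h => by
      have := Finset.mem_powerset.mp hS h; simp [Finset.mem_Icc] at this
    rw [if_neg this, mul_one]; ring
  rw [h2, ← Finset.sum_mul, ← Fsum]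
  ring

lemma Fsum_zero (P : ℕ → Rˣ) (Q : ℕ → R) (y : R) : Fsum P Q y 0 = 1 := by
  simp [Fsum, wgt]

lemma Fsum_one (P : ℕ → Rˣ) (Q : ℕ → R) (y : R) :
    Fsum P Q y 1 = 1 + y * ((P 1 * (P 0)⁻¹ : Rˣ) : R) := by
  have : Finset.Icc 1 1 = {1} := rfl
  rw [Fsum, this]
  rw [show ({1} : Finset ℕ).powerset = {∅, {1}} from rfl]
  rw [Finset.sum_insert (by decide), Finset.sum_singleton]
  simp [wgt]

lemma triDet_zero (A B : ℕ → R) : triDet 0 A B = 1 := Matrix.det_fin_zero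

lemma triDet_one (A B : ℕ → R) : triDet 1 A B = A 0 := by
  rw [triDet, Matrix.det_fin_one]; simp

lemma triDet_rec (A B : ℕ → R) (m : ℕ) :
    triDet (m + 2) A B = A (m + 1) * triDet (m + 1) A B - B (m + 1) * triDet m A B := by
  set M : Matrix (Fin (m + 2)) (Fin (m + 2)) R := Matrix.of fun i j : Fin (m + 2) =>
    if (i : ℕ) = (j : ℕ) then A i
    else if (i : ℕ) + 1 = (j : ℕ) then B j
    else if (j : ℕ) + 1 = (i : ℕ) then 1
    else 0 with hM
  have hMe : ∀ i j : Fin (m + 2), M i j =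
      (if (i : ℕ) = (j : ℕ) then A i
       else if (i : ℕ) + 1 = (j : ℕ) then B j
       else if (j : ℕ) + 1 = (i : ℕ) then 1
       else 0) := fun i j => rfl
  have h1 : triDet (m + 2) A B = M.det := rfl
  rw [h1, Matrix.det_succ_column M (Fin.last (m + 1))]
  rw [Fin.sum_univ_castSucc, Fin.sum_univ_castSucc]
  have hz : ∀ i : Fin m,
      (-1 : R) ^ (((i.castSucc.castSucc : Fin (m + 2)) : ℕ) + ((Fin.last (m + 1) : Fin (m+2)) : ℕ)) *
        M i.castSucc.castSucc (Fin.last (m + 1)) *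
        (M.submatrix (i.castSucc.castSucc).succAbove (Fin.last (m + 1)).succAbove).det = 0 := by
    intro i
    have : M i.castSucc.castSucc (Fin.last (m + 1)) = 0 := by
      rw [hMe]
      have h1 : (i : ℕ) < m := i.isLt
      simp only [Fin.coe_castSucc, Fin.val_last]
      rw [if_neg (by omega), if_neg (by omega), if_neg (by omega)]
    rw [this, mul_zero, zero_mul]
  rw [Finset.sum_congr rfl (fun i _ => hz i), Finset.sum_const_zero, zero_add]
  -- term at i = last : A (m+1) * triDet (m+1)
  have hlast : M (Fin.last (m + 1)) (Fin.last (m + 1)) = A (m + 1) := by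
    rw [hMe]; simp
  have hminor_last : (M.submatrix (Fin.last (m + 1)).succAbove (Fin.last (m + 1)).succAbove).det
      = triDet (m + 1) A B := by
    rw [triDet]
    congr 1
    ext i j
    rw [Fin.succAbove_last, Matrix.submatrix_apply, hMe]
    simp [Fin.coe_castSucc]
  -- term at i = castSucc last : -B(m+1) * triDet m
  have hsup : M (Fin.castSucc (Fin.last m)) (Fin.last (m + 1)) = B (m + 1) := by
    rw [hMe]
    simp only [Fin.coe_castSucc, Fin.val_last]
    split_ifs with h1
    · omega
    · rfl
  set N : Matrix (Fin (m + 1)) (Fin (m + 1)) R :=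
    M.submatrix (Fin.castSucc (Fin.last m)).succAbove (Fin.last (m + 1)).succAbove with hN
  have hNdet : N.det = triDet m A B := by
    rw [Matrix.det_succ_row N (Fin.last m), Fin.sum_univ_castSucc]
    have hrow : ∀ j : Fin (m + 1), N (Fin.last m) j = M ⟨m + 1, by omega⟩ j.castSucc := by
      intro j
      rw [hN, Matrix.submatrix_apply, Fin.succAbove_last]
      congr 1
      rw [Fin.succAbove_of_le_castSucc _ _ (by rw [Fin.le_castSucc_iff]; exact Fin.lt_succ)]
      · ext; simp
    have hz2 : ∀ j : Fin m,
        (-1 : R) ^ (((Fin.last m : Fin (m+1)) : ℕ) + ((j.castSucc : Fin (m+1)) : ℕ)) *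
          N (Fin.last m) j.castSucc *
          (N.submatrix (Fin.last m).succAbove (j.castSucc).succAbove).det = 0 := by
      intro j
      have : N (Fin.last m) j.castSucc = 0 := by
        rw [hrow, hMe]
        simp only [Fin.coe_castSucc]
        have : (j : ℕ) < m := j.isLt
        rw [if_neg (by omega), if_neg (by omega), if_neg (by omega)]
      rw [this, mul_zero, zero_mul]
    rw [Finset.sum_congr rfl (fun j _ => hz2 j), Finset.sum_const_zero, zero_add]
    have hent : N (Fin.last m) (Fin.last m) = 1 := by
      rw [hrow, hMe]
      simp only [Fin.coe_castSucc, Fin.val_last]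
      split_ifs with h1 h2
      · omega
      · omega
      · rfl
    have hminor : (N.submatrix (Fin.last m).succAbove (Fin.last m).succAbove).det
        = triDet m A B := by
      rw [triDet]
      congr 1
      ext i j
      rw [Matrix.submatrix_apply, Fin.succAbove_last, hN, Matrix.submatrix_apply,
        Fin.succAbove_last, hMe]
      have hio : ((Fin.castSucc (Fin.last m)).succAbove i.castSucc : ℕ) = (i : ℕ) := by
        rw [Fin.succAbove_of_castSucc_lt]
        · simp
        · rw [Fin.castSucc_lt_castSucc_iff]
          exact Fin.castSucc_lt_last i
      rw [hio]
      simp [Fin.coe_castSucc]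
    rw [hent, hminor, Fin.val_last, mul_one]
    rw [show m + m = 2 * m by ring, pow_mul]
    norm_num
  rw [hlast, hminor_last, hsup, hNdet, Fin.val_last, Fin.coe_castSucc, Fin.val_last]
  rw [show m + (m + 1) = 2 * m + 1 by ring, pow_succ, pow_mul]
  rw [show (m + 1) + (m + 1) = 2 * (m + 1) by ring, pow_mul]
  norm_num
  ring

lemma gap_iff {m k : ℕ} {f : Fin (k + 1) → Fin (m + 1)} (hf : StrictMono f)
    (h0 : f 0 = 0) (s : Fin k) :
    ((f s.succ : ℕ) - (f s.castSucc : ℕ) = 1) ↔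
      ((f s.succ : ℕ) - 1 ∈ Finset.image (fun t : Fin k => (f t.succ : ℕ)) Finset.univ ∨
        (f s.succ : ℕ) = 1) := by
  have hlt : (f s.castSucc : ℕ) < (f s.succ : ℕ) := hf (Fin.castSucc_lt_succ : s.castSucc < s.succ)
  constructor
  · intro h
    by_cases hs : s.castSucc = (0 : Fin (k + 1))
    · right
      have : (f s.castSucc : ℕ) = 0 := by rw [hs, h0]; rfl
      omega
    · left
      obtain ⟨t, ht⟩ := Fin.eq_succ_of_ne_zero hs
      refine Finset.mem_image.mpr ⟨t, Finset.mem_univ t, ?_⟩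
      rw [← ht]
      omega
  · rintro (h | h)
    · obtain ⟨t, -, ht⟩ := Finset.mem_image.mp h
      have hb1 : 1 ≤ (f s.succ : ℕ) := by omega
      have h1 : f t.succ < f s.succ := by
        rw [Fin.lt_def, ht]; omega
      have h2 : t.succ ≤ s.castSucc := by
        have := hf.lt_iff_lt.mp h1
        rw [Fin.le_def, Fin.lt_def] at *
        simp only [Fin.val_succ, Fin.coe_castSucc] at *
        omega
      have h3 : (f t.succ : ℕ) ≤ (f s.castSucc : ℕ) := hf.monotone h2
      omega
    · have : (f s.castSucc : ℕ) = 0 := by omega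
      omega

lemma toda_k_eq (P : ℕ → Rˣ) (Q : ℕ → R) (y : R) (m k : ℕ) :
    ∑ f ∈ Finset.univ.filter
        (fun f : Fin (k + 1) → Fin (m + 1) => StrictMono f ∧ f 0 = 0),
      todaTerm P Q f * y ^ k =
    ∑ S ∈ (Finset.Icc 1 m).powerset.filter (fun S => S.card = k), wgt P Q y S := by
  classical
  refine Finset.sum_bij (fun f _ => Finset.image (fun t : Fin k => ((f t.succ : ℕ))) Finset.univ)
    ?_ ?_ ?_ ?_
  · -- maps into target
    rintro f hf
    obtain ⟨hmono, h0⟩ := Finset.mem_filter.mp hf |>.2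
    refine Finset.mem_filter.mpr ⟨Finset.mem_powerset.mpr ?_, ?_⟩
    · intro x hx
      obtain ⟨t, -, rfl⟩ := Finset.mem_image.mp hx
      refine Finset.mem_Icc.mpr ⟨?_, ?_⟩
      · have : f 0 < f t.succ := hmono (Fin.succ_pos t)
        rw [h0] at this
        have : (0 : ℕ) < (f t.succ : ℕ) := this
        omega
      · exact Nat.lt_succ_iff.mp (f t.succ).isLt
    · rw [Finset.card_image_of_injective _ ?_, Finset.card_univ, Fintype.card_fin]
      intro a b hab
      have := hmono.injective (Fin.val_injective hab)
      exact Fin.succ_injective _ this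
  · -- injective
    rintro f hf g hg hfg
    obtain ⟨hfm, hf0⟩ := Finset.mem_filter.mp hf |>.2
    obtain ⟨hgm, hg0⟩ := Finset.mem_filter.mp hg |>.2
    set S := Finset.image (fun t : Fin k => ((f t.succ : ℕ))) Finset.univ with hSdef
    have h0S : 0 ∉ S := by
      intro h
      obtain ⟨t, -, ht⟩ := Finset.mem_image.mp h
      have : f 0 < f t.succ := hfm (Fin.succ_pos t)
      rw [hf0] at this
      have : (0 : ℕ) < (f t.succ : ℕ) := this
      omega
    have hcard : (insert 0 S).card = k + 1 := by
      rw [Finset.card_insert_of_notMem h0S, hSdef,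
        Finset.card_image_of_injective _ (fun a b hab =>
          Fin.succ_injective _ (hfm.injective (Fin.val_injective hab))),
        Finset.card_univ, Fintype.card_fin]
    have key : ∀ (h : Fin (k + 1) → Fin (m + 1)), StrictMono h → h 0 = 0 →
        Finset.image (fun t : Fin k => ((h t.succ : ℕ))) Finset.univ = S →
        (fun i => ((h i : ℕ))) = (insert 0 S).orderEmbOfFin hcard := by
      intro h hm h0 him
      apply Finset.orderEmbOfFin_unique hcard
      · intro x
        rcases Fin.eq_zero_or_eq_succ x with rfl | ⟨t, rfl⟩
        · rw [h0]
          exact Finset.mem_insert_self 0 S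
        · refine Finset.mem_insert_of_mem ?_
          rw [← him]
          exact Finset.mem_image.mpr ⟨t, Finset.mem_univ t, rfl⟩
      · exact fun a b hab => hm hab
    have e1 := key f hfm hf0 rfl
    have e2 := key g hgm hg0 hfg.symm
    funext i
    exact Fin.val_injective (by rw [congrFun e1 i, congrFun e2 i])
  · -- surjective
    rintro S hS
    obtain ⟨hSsub, hScard⟩ := Finset.mem_filter.mp hS
    have hSsub' := Finset.mem_powerset.mp hSsub
    have h0S : 0 ∉ S := fun h => by
      have := Finset.mem_Icc.mp (hSsub' h); omega
    have hcard : (insert 0 S).card = k + 1 := by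
      rw [Finset.card_insert_of_notMem h0S, hScard]
    set e := (insert 0 S).orderEmbOfFin hcard with he
    have hmem : ∀ i, e i ∈ insert 0 S := fun i => Finset.orderEmbOfFin_mem _ hcard i
    have hbound : ∀ i, (e i) < m + 1 := by
      intro i
      rcases Finset.mem_insert.mp (hmem i) with h | h
      · omega
      · have := Finset.mem_Icc.mp (hSsub' h); omega
    refine ⟨fun i => ⟨e i, hbound i⟩, ?_, ?_⟩
    · refine Finset.mem_filter.mpr ⟨Finset.mem_univ _, ?_, ?_⟩
      · intro a b hab
        exact e.strictMono hab
      · have h0 : e ⟨0, Nat.succ_pos k⟩ = 0 := by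
          rw [Finset.orderEmbOfFin_zero hcard (Nat.succ_pos k)]
          apply le_antisymm _ (Nat.zero_le _)
          exact Finset.min'_le _ 0 (Finset.mem_insert_self 0 S)
        exact Fin.val_injective h0
    · -- image equals S
      ext x
      simp only [Finset.mem_image, Finset.mem_univ, true_and]
      constructor
      · rintro ⟨t, rfl⟩
        show (e t.succ : ℕ) ∈ S
        rcases Finset.mem_insert.mp (hmem t.succ) with h | h
        · exfalso
          have h0 : e ⟨0, Nat.succ_pos k⟩ = 0 := by
            rw [Finset.orderEmbOfFin_zero hcard (Nat.succ_pos k)]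
            apply le_antisymm _ (Nat.zero_le _)
            exact Finset.min'_le _ 0 (Finset.mem_insert_self 0 S)
          have : t.succ = ⟨0, Nat.succ_pos k⟩ := e.injective (by rw [h, h0])
          exact (Fin.succ_ne_zero t) this
        · exact h
      · intro hx
        have : x ∈ insert 0 S := Finset.mem_insert_of_mem hx
        have : x ∈ Set.range e := by
          rw [Finset.range_orderEmbOfFin]
          exact_mod_cast this
        obtain ⟨i, hi⟩ := this
        have hix : i ≠ ⟨0, Nat.succ_pos k⟩ := by
          intro h
          rw [h] at hi
          rw [Finset.orderEmbOfFin_zero hcard (Nat.succ_pos k)] at hi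
          have h0 : (insert 0 S).min' ⟨0, Finset.mem_insert_self 0 S⟩ = 0 := by
            apply le_antisymm _ (Nat.zero_le _)
            exact Finset.min'_le _ 0 (Finset.mem_insert_self 0 S)
          rw [h0] at hi
          rw [← hi] at hx
          exact h0S hx
        obtain ⟨t, ht⟩ := Fin.eq_succ_of_ne_zero (show i ≠ 0 from fun h => hix h)
        exact ⟨t, by rw [← ht, hi]⟩
  · -- values agree
    rintro f hf
    obtain ⟨hmono, h0⟩ := Finset.mem_filter.mp hf |>.2
    set S := Finset.image (fun t : Fin k => ((f t.succ : ℕ))) Finset.univ with hSdef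
    have hinj : Function.Injective (fun t : Fin k => ((f t.succ : ℕ))) :=
      fun a b hab => Fin.succ_injective _ (hmono.injective (Fin.val_injective hab))
    rw [wgt, hSdef, Finset.prod_image (fun a _ b _ h => hinj h)]
    rw [todaTerm, show y ^ k = ∏ _t : Fin k, y from by
      rw [Finset.prod_const, Finset.card_univ, Fintype.card_fin], ← Finset.prod_mul_distrib]
    apply Finset.prod_congr rfl
    intro t _
    have := gap_iff hmono h0 t
    by_cases h : (f t.succ : ℕ) - (f t.castSucc : ℕ) = 1
    · rw [if_pos h, if_pos (this.mp h)]
      ring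
    · rw [if_neg h, if_neg (fun hc => h (this.mpr hc))]
      ring


lemma toda_eq_Fsum (P : ℕ → Rˣ) (Q : ℕ → R) (y : R) (m : ℕ) :
    todaPoly P Q m y = Fsum P Q y m := by
  classical
  rw [todaPoly, Fsum]
  have hcongr : ∀ k ∈ Finset.range (m + 1), todaT P Q m k * y ^ k =
      ∑ S ∈ (Finset.Icc 1 m).powerset.filter (fun S => S.card = k), wgt P Q y S := by
    intro k _
    rw [todaT, Finset.sum_mul]
    exact toda_k_eq P Q y m k
  rw [Finset.sum_congr rfl hcongr]
  refine Finset.sum_fiberwise_of_maps_to ?_ _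
  intro S hS
  refine Finset.mem_range.mpr (Nat.lt_succ_of_le ?_)
  calc S.card ≤ (Finset.Icc 1 m).card := Finset.card_le_card (Finset.mem_powerset.mp hS)
    _ = m := by rw [Nat.card_Icc]; omega

end Aux

/-- `T^{(n)}(y)` equals the tridiagonal determinant
`D(1 + y·P_1/P_0, …, 1 + y·P_n/P_{n-1}; y·(P_2/P_1)·Q_1, …, y·(P_n/P_{n-1})·Q_{n-1})`,
where `P_0 = 1` and `Q_0 = 0`. -/
theorem todaPoly_eq_triDet {R : Type*} [CommRing R] (P : ℕ → Rˣ) (Q : ℕ → R)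
    (hP0 : P 0 = 1) (hQ0 : Q 0 = 0) (y : R) (n : ℕ) :
    todaPoly P Q n y =
      triDet n (fun j => 1 + y * ((P (j + 1) * (P j)⁻¹ : Rˣ) : R))
        (fun j => y * ((P (j + 1) * (P j)⁻¹ : Rˣ) : R) * Q j) := by
  set A : ℕ → R := fun j => 1 + y * ((P (j + 1) * (P j)⁻¹ : Rˣ) : R) with hA
  set B : ℕ → R := fun j => y * ((P (j + 1) * (P j)⁻¹ : Rˣ) : R) * Q j with hB
  have key : ∀ l, Fsum P Q y l = triDet l A B ∧ Fsum P Q y (l + 1) = triDet (l + 1) A B := by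
    intro l
    induction l with
    | zero =>
      constructor
      · rw [Fsum_zero, triDet_zero]
      · rw [Fsum_one, triDet_one, hA]
    | succ l ih =>
      refine ⟨ih.2, ?_⟩
      rw [Fsum_rec, triDet_rec, ih.1, ih.2, hA, hB]
  rw [toda_eq_Fsum]
  exact (key n).1
end

section
/- Let B be a commutative ring, n ≥ 1, and Q_1, …, Q_{n-1} ∈ B such that each 1 − Q_j is invertible; set Q_0 = 0. Let d_1, …, d_n ∈ B, and let s_{k,p} ∈ B be given for −1 ≤ k ≤ n and all integers p, with s_{k,p} = 0 whenever p < 0 or p > max(k,0), and s_{-1,0} = s_{0,0} = 1. Suppose that for each k = 1, …, n the identity (Σ_p s_{k-1,p} y^p)·(1 + y d_k) = Σ_p s_{k,p} y^p − y·(Q_{k-1}/(1−Q_{k-1}))·d_k·(Σ_p s_{k-1,p} y^p − Σ_p s_{k-2,p} y^p) holds in the polynomial ring B[y]. Then for all 0 ≤ p ≤ k ≤ n one has s_{k,p} = Σ_{J ⊆ {1,…,k}, |J| = p} ( ∏_{1 ≤ j ≤ k−1, j ∈ J and j+1 ∈ J} (1 − Q_j)^{-1} ) · ∏_{j ∈ J}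 d_j. -/
open Polynomial Finset


private lemma ww_coeffsum {B : Type*} [CommRing B] (n : ℕ) (a : ℕ → B) (p : ℕ) (hp : p ≤ n) :
    (∑ i ∈ Finset.range (n+1), C (a i) * X^i).coeff p = a p := by
  rw [finset_sum_coeff]
  simp only [coeff_C_mul, coeff_X_pow, mul_ite, mul_one, mul_zero]
  rw [Finset.sum_ite_eq (Finset.range (n+1)) p a]
  simp [Nat.lt_succ_of_le hp]

/-- The combinatorial right-hand side. -/
private noncomputable def ww_F {B : Type*} [CommRing B] (Q d : ℕ → B) (k p : ℕ) : B :=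
  ∑ J ∈ Finset.powersetCard p (Finset.Icc 1 k),
    (∏ j ∈ (Finset.Icc 1 (k - 1)).filter (fun j => j ∈ J ∧ j + 1 ∈ J),
        Ring.inverse (1 - Q j)) * ∏ j ∈ J, d j

private lemma ww_F_zero {B : Type*} [CommRing B] (Q d : ℕ → B) (k : ℕ) : ww_F Q d k 0 = 1 := by
  simp [ww_F, Finset.powersetCard_zero, Finset.filter_false_of_mem]

private lemma ww_F_big {B : Type*} [CommRing B] (Q d : ℕ → B) {k p : ℕ} (h : k < p) :
    ww_F Q d k p = 0 := by
  have : (Finset.Icc 1 k).card < p := by rw [Nat.card_Icc]; omega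
  rw [ww_F, Finset.powersetCard_eq_empty.mpr this, Finset.sum_empty]

private lemma ww_filterD {J : Finset ℕ} {m M : ℕ} (hJ : J ⊆ Finset.Icc 1 m) (hM : m - 1 ≤ M) :
    (Finset.Icc 1 M).filter (fun j => j ∈ J ∧ j + 1 ∈ J) =
      (Finset.Icc 1 (m - 1)).filter (fun j => j ∈ J ∧ j + 1 ∈ J) := by
  ext j
  simp only [Finset.mem_filter, Finset.mem_Icc]
  constructor
  · rintro ⟨⟨h1, h2⟩, hj, hj1⟩
    have := Finset.mem_Icc.mp (hJ hj1)
    exact ⟨⟨h1, by omega⟩, hj, hj1⟩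
  · rintro ⟨⟨h1, h2⟩, hj, hj1⟩
    exact ⟨⟨h1, by omega⟩, hj, hj1⟩

private lemma ww_prodW {B : Type*} [CommRing B] (Q : ℕ → B) {k : ℕ} (hk : 1 ≤ k) {J : Finset ℕ}
    (hJ : J ⊆ Finset.Icc 1 (k - 1)) :
    ∏ j ∈ (Finset.Icc 1 (k - 1)).filter
        (fun j => j ∈ insert k J ∧ j + 1 ∈ insert k J), Ring.inverse (1 - Q j)
      = (if k - 1 ∈ J then Ring.inverse (1 - Q (k - 1)) else 1) *
        ∏ j ∈ (Finset.Icc 1 (k - 2)).filter (fun j => j ∈ J ∧ j + 1 ∈ J),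
          Ring.inverse (1 - Q j) := by
  have hmem : ∀ j ∈ J, 1 ≤ j ∧ j ≤ k - 1 := fun j hj => Finset.mem_Icc.mp (hJ hj)
  by_cases hc : k - 1 ∈ J
  · have hk2 : 2 ≤ k := by have := hmem _ hc; omega
    rw [if_pos hc]
    have hset : (Finset.Icc 1 (k - 1)).filter
        (fun j => j ∈ insert k J ∧ j + 1 ∈ insert k J)
        = insert (k - 1) ((Finset.Icc 1 (k - 2)).filter (fun j => j ∈ J ∧ j + 1 ∈ J)) := by
      ext j
      simp only [Finset.mem_filter, Finset.mem_Icc, Finset.mem_insert]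
      constructor
      · rintro ⟨⟨h1, h2⟩, hj, hj1⟩
        by_cases hjk : j = k - 1
        · exact Or.inl hjk
        · right
          have hj' : j ∈ J := by
            rcases hj with h | h
            exacts [absurd h (by omega), h]
          have hj1' : j + 1 ∈ J := by
            rcases hj1 with h | h
            exacts [absurd h (by omega), h]
          have := hmem _ hj1'
          exact ⟨⟨h1, by omega⟩, hj', hj1'⟩
      · rintro (h | ⟨⟨h1, h2⟩, hj, hj1⟩)
        · subst h
          exact ⟨⟨by omega, le_refl _⟩, Or.inr hc, Or.inl (by omega)⟩
        · exact ⟨⟨h1, by omega⟩, Or.inr hj, Or.inr hj1⟩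
    rw [hset, Finset.prod_insert (by
      simp only [Finset.mem_filter, Finset.mem_Icc]
      rintro ⟨⟨h1, h2⟩, -⟩
      omega)]
  · rw [if_neg hc, one_mul]
    congr 1
    ext j
    simp only [Finset.mem_filter, Finset.mem_Icc, Finset.mem_insert]
    constructor
    · rintro ⟨⟨h1, h2⟩, hj, hj1⟩
      have hj' : j ∈ J := by
        rcases hj with h | h
        exacts [absurd h (by omega), h]
      have hj1' : j + 1 ∈ J := by
        rcases hj1 with h | h
        · exfalso
          have hjj : j = k - 1 := by omega
          exact hc (hjj ▸ hj')
        · exact h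
      have := hmem _ hj1'
      exact ⟨⟨h1, by omega⟩, hj', hj1'⟩
    · rintro ⟨⟨h1, h2⟩, hj, hj1⟩
      exact ⟨⟨h1, by omega⟩, Or.inr hj, Or.inr hj1⟩

section
variable {B : Type*} [CommRing B] (n : ℕ) (Q : ℕ → B) (d : ℕ → B) (s : ℤ → ℤ → B)
variable (hrec : ∀ k : ℕ, 1 ≤ k → k ≤ n →
      (∑ p ∈ Finset.range (n + 1), C (s ((k : ℤ) - 1) p) * X ^ p) * (1 + X * C (d k)) =
        (∑ p ∈ Finset.range (n + 1), C (s (k : ℤ) p) * X ^ p)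
          - X * C (Q (k - 1) * Ring.inverse (1 - Q (k - 1)) * d k) *
            ((∑ p ∈ Finset.range (n + 1), C (s ((k : ℤ) - 1) p) * X ^ p)
              - (∑ p ∈ Finset.range (n + 1), C (s ((k : ℤ) - 2) p) * X ^ p)))

include hrec

private lemma ww_srec (k p : ℕ) (hk1 : 1 ≤ k) (hkn : k ≤ n) (hpn : p + 1 ≤ n) :
    s (k : ℤ) (p + 1 : ℕ) = s ((k : ℤ) - 1) (p + 1 : ℕ) + d k * s ((k : ℤ) - 1) (p : ℕ)
      + Q (k - 1) * Ring.inverse (1 - Q (k - 1)) * d k *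
          (s ((k : ℤ) - 1) (p : ℕ) - s ((k : ℤ) - 2) (p : ℕ)) := by
  have h := congrArg (fun f => coeff f (p + 1)) (hrec k hk1 hkn)
  set P1 := ∑ q ∈ Finset.range (n + 1), C (s ((k : ℤ) - 1) q) * X ^ q with hP1
  set P0 := ∑ q ∈ Finset.range (n + 1), C (s (k : ℤ) q) * X ^ q with hP0
  set P2 := ∑ q ∈ Finset.range (n + 1), C (s ((k : ℤ) - 2) q) * X ^ q with hP2
  set c := d k with hc
  set q0 := Q (k - 1) * Ring.inverse (1 - Q (k - 1)) * d k with hq0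
  have eL : P1 * (1 + X * C c) = P1 + X * (C c * P1) := by ring
  have eR : P0 - X * C q0 * (P1 - P2) = P0 - X * (C q0 * (P1 - P2)) := by ring
  rw [eL, eR, coeff_add, coeff_sub, coeff_X_mul, coeff_X_mul, coeff_C_mul, coeff_C_mul,
    coeff_sub] at h
  rw [hP1, hP0, hP2] at h
  rw [ww_coeffsum n (fun i => s ((k : ℤ) - 1) i) (p + 1) hpn,
    ww_coeffsum n (fun i => s ((k : ℤ) - 1) i) p (by omega),
    ww_coeffsum n (fun i => s (k : ℤ) i) (p + 1) hpn,
    ww_coeffsum n (fun i => s ((k : ℤ) - 2) i) p (by omega)] at h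
  push_cast at h ⊢
  linear_combination -h

private lemma ww_szero (hs0 : s 0 0 = 1) : ∀ k : ℕ, k ≤ n → s (k : ℤ) 0 = 1 := by
  intro k
  induction k with
  | zero => intro _; exact_mod_cast hs0
  | succ k ih =>
    intro hkn
    have h := congrArg (fun f => coeff f 0) (hrec (k + 1) (by omega) hkn)
    rw [mul_coeff_zero, coeff_sub, mul_coeff_zero, mul_coeff_zero, coeff_X_zero,
      zero_mul, zero_mul, sub_zero] at h
    rw [ww_coeffsum n (fun i => s ((k + 1 : ℕ) : ℤ) i) 0 (by omega),
      ww_coeffsum n (fun i => s (((k + 1 : ℕ) : ℤ) - 1) i) 0 (by omega)] at h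
    have h1 : (1 + X * C (d (k + 1))).coeff 0 = 1 := by
      rw [coeff_add, mul_coeff_zero, coeff_X_zero, zero_mul, coeff_one]
      norm_num
    rw [h1, mul_one] at h
    have hcast : ((k + 1 : ℕ) : ℤ) - 1 = (k : ℤ) := by push_cast; ring
    rw [hcast] at h
    push_cast at h ⊢
    rw [← h]
    exact ih (by omega)
end

private lemma ww_Frec {B : Type*} [CommRing B] (Q d : ℕ → B) {k : ℕ} (hk : 1 ≤ k)
    (hinvk : 1 + Q (k - 1) * Ring.inverse (1 - Q (k - 1)) = Ring.inverse (1 - Q (k - 1)))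
    (p : ℕ) :
    ww_F Q d k (p + 1) = ww_F Q d (k - 1) (p + 1)
      + d k * (Ring.inverse (1 - Q (k - 1)) * ww_F Q d (k - 1) p
          - Q (k - 1) * Ring.inverse (1 - Q (k - 1)) * ww_F Q d (k - 2) p) := by
  have hknot : k ∉ Finset.Icc 1 (k - 1) := by simp [Finset.mem_Icc]; omega
  have hins : Finset.Icc 1 k = insert k (Finset.Icc 1 (k - 1)) := by
    ext j; simp only [Finset.mem_Icc, Finset.mem_insert]; omega
  have hsub : ∀ J ∈ Finset.powersetCard (p + 1) (Finset.Icc 1 (k - 1)),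
      J ⊆ Finset.Icc 1 (k - 1) := fun J hJ => (Finset.mem_powersetCard.mp hJ).1
  -- expand LHS
  have hdisj : Disjoint (Finset.powersetCard (p + 1) (Finset.Icc 1 (k - 1)))
      ((Finset.powersetCard p (Finset.Icc 1 (k - 1))).image (insert k)) := by
    rw [Finset.disjoint_left]
    intro J h1 h2
    obtain ⟨J', hJ', rfl⟩ := Finset.mem_image.mp h2
    exact hknot ((Finset.mem_powersetCard.mp h1).1 (Finset.mem_insert_self k J'))
  have hinj : ∀ J1 ∈ Finset.powersetCard p (Finset.Icc 1 (k - 1)),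
      ∀ J2 ∈ Finset.powersetCard p (Finset.Icc 1 (k - 1)),
      insert k J1 = insert k J2 → J1 = J2 := by
    intro J1 h1 J2 h2 hins'
    have hk1 : k ∉ J1 := fun h => hknot ((Finset.mem_powersetCard.mp h1).1 h)
    have hk2 : k ∉ J2 := fun h => hknot ((Finset.mem_powersetCard.mp h2).1 h)
    rw [← Finset.erase_insert hk1, ← Finset.erase_insert hk2, hins']
  rw [ww_F, hins, Finset.powersetCard_succ_insert hknot, Finset.sum_union hdisj,
    Finset.sum_image hinj]
  -- first sum is ww_F (k-1) (p+1)
  have e1 : ∑ J ∈ Finset.powersetCard (p + 1) (Finset.Icc 1 (k - 1)),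
      (∏ j ∈ (Finset.Icc 1 (k - 1)).filter (fun j => j ∈ J ∧ j + 1 ∈ J),
        Ring.inverse (1 - Q j)) * ∏ j ∈ J, d j = ww_F Q d (k - 1) (p + 1) := by
    refine Finset.sum_congr rfl fun J hJ => ?_
    rw [ww_filterD (hsub J hJ) (by omega)]
  rw [e1]
  -- second sum
  have e2 : ∀ J ∈ Finset.powersetCard p (Finset.Icc 1 (k - 1)),
      (∏ j ∈ (Finset.Icc 1 (k - 1)).filter
          (fun j => j ∈ insert k J ∧ j + 1 ∈ insert k J), Ring.inverse (1 - Q j))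
        * ∏ j ∈ insert k J, d j
      = d k * ((if k - 1 ∈ J then Ring.inverse (1 - Q (k - 1)) else 1) *
          ((∏ j ∈ (Finset.Icc 1 (k - 2)).filter (fun j => j ∈ J ∧ j + 1 ∈ J),
              Ring.inverse (1 - Q j)) * ∏ j ∈ J, d j)) := by
    intro J hJ
    have hJs : J ⊆ Finset.Icc 1 (k - 1) := (Finset.mem_powersetCard.mp hJ).1
    have hkJ : k ∉ J := fun h => hknot (hJs h)
    rw [ww_prodW Q hk hJs, Finset.prod_insert hkJ]
    ring
  rw [Finset.sum_congr rfl e2, ← Finset.mul_sum]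
  -- split the sum by k-1 ∈ J
  rw [← Finset.sum_filter_add_sum_filter_not
    (Finset.powersetCard p (Finset.Icc 1 (k - 1))) (fun J => k - 1 ∈ J)]
  set A := ∑ J ∈ (Finset.powersetCard p (Finset.Icc 1 (k - 1))).filter (fun J => k - 1 ∈ J),
      (∏ j ∈ (Finset.Icc 1 (k - 2)).filter (fun j => j ∈ J ∧ j + 1 ∈ J),
        Ring.inverse (1 - Q j)) * ∏ j ∈ J, d j with hA
  set Bs := ∑ J ∈ (Finset.powersetCard p (Finset.Icc 1 (k - 1))).filter (fun J => ¬ k - 1 ∈ J),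
      (∏ j ∈ (Finset.Icc 1 (k - 2)).filter (fun j => j ∈ J ∧ j + 1 ∈ J),
        Ring.inverse (1 - Q j)) * ∏ j ∈ J, d j with hB
  have hsum1 : ∑ J ∈ (Finset.powersetCard p (Finset.Icc 1 (k - 1))).filter (fun J => k - 1 ∈ J),
      (if k - 1 ∈ J then Ring.inverse (1 - Q (k - 1)) else 1) *
        ((∏ j ∈ (Finset.Icc 1 (k - 2)).filter (fun j => j ∈ J ∧ j + 1 ∈ J),
          Ring.inverse (1 - Q j)) * ∏ j ∈ J, d j)
      = Ring.inverse (1 - Q (k - 1)) * A := by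
    rw [hA, Finset.mul_sum]
    refine Finset.sum_congr rfl fun J hJ => ?_
    rw [if_pos (Finset.mem_filter.mp hJ).2]
  have hsum2 : ∑ J ∈ (Finset.powersetCard p (Finset.Icc 1 (k - 1))).filter (fun J => ¬ k - 1 ∈ J),
      (if k - 1 ∈ J then Ring.inverse (1 - Q (k - 1)) else 1) *
        ((∏ j ∈ (Finset.Icc 1 (k - 2)).filter (fun j => j ∈ J ∧ j + 1 ∈ J),
          Ring.inverse (1 - Q j)) * ∏ j ∈ J, d j)
      = Bs := by
    rw [hB]
    refine Finset.sum_congr rfl fun J hJ => ?_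
    rw [if_neg (Finset.mem_filter.mp hJ).2, one_mul]
  rw [hsum1, hsum2]
  -- A + Bs = ww_F (k-1) p
  have hAB : A + Bs = ww_F Q d (k - 1) p := by
    have h21 : k - 2 = k - 1 - 1 := by omega
    rw [hA, hB, Finset.sum_filter_add_sum_filter_not, ww_F, h21]
  -- Bs = ww_F (k-2) p
  have hBs : Bs = ww_F Q d (k - 2) p := by
    rw [hB, ww_F]
    have hset : (Finset.powersetCard p (Finset.Icc 1 (k - 1))).filter (fun J => ¬ k - 1 ∈ J)
        = Finset.powersetCard p (Finset.Icc 1 (k - 2)) := by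
      ext J
      simp only [Finset.mem_filter, Finset.mem_powersetCard]
      constructor
      · rintro ⟨⟨hJs, hc⟩, hnot⟩
        refine ⟨fun j hj => ?_, hc⟩
        have := Finset.mem_Icc.mp (hJs hj)
        have : j ≠ k - 1 := fun h => hnot (h ▸ hj)
        simp only [Finset.mem_Icc]
        omega
      · rintro ⟨hJs, hc⟩
        refine ⟨⟨fun j hj => ?_, hc⟩, fun h => ?_⟩
        · have := Finset.mem_Icc.mp (hJs hj)
          simp only [Finset.mem_Icc]; omega
        · have := Finset.mem_Icc.mp (hJs h)
          omega
    rw [hset]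
    exact Finset.sum_congr rfl fun J hJ =>
      by rw [ww_filterD (Finset.mem_powersetCard.mp hJ).1 (by omega)]
  have hABs : A = ww_F Q d (k - 1) p - ww_F Q d (k - 2) p := by
    rw [← hAB, hBs]; ring
  rw [hABs, hBs]
  linear_combination (d k * ww_F Q d (k - 2) p) * hinvk


/-- Abstract form of the quantum K Whitney relations for the complete flag
variety `Fl(n)`: if `s k p` (modelling `∧^p S_k`) vanishes for `p < 0` or
`p > max k 0`, satisfies `s (-1) 0 = s 0 0 = 1`, and for each `k = 1, …, n`
the polynomial identity
`(Σ_p s_{k-1,p} y^p)(1 + y d_k)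
  = Σ_p s_{k,p} y^p - y (Q_{k-1}/(1-Q_{k-1})) d_k (Σ_p s_{k-1,p} y^p - Σ_p s_{k-2,p} y^p)`
holds in `B[y]`, then for all `0 ≤ p ≤ k ≤ n`,
`s_{k,p} = Σ_{J ⊆ {1,…,k}, |J| = p} (∏_{1 ≤ j ≤ k-1, j ∈ J, j+1 ∈ J} (1-Q_j)⁻¹) ∏_{j ∈ J} d_j`. -/
theorem whitney_wedge_formula {B : Type*} [CommRing B] (n : ℕ) (hn : 1 ≤ n)
    (Q : ℕ → B) (hQ0 : Q 0 = 0)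
    (hQunit : ∀ j : ℕ, 1 ≤ j → j ≤ n - 1 → IsUnit (1 - Q j))
    (d : ℕ → B) (s : ℤ → ℤ → B)
    (hvanish : ∀ k p : ℤ, -1 ≤ k → k ≤ n → (p < 0 ∨ p > max k 0) → s k p = 0)
    (hs0 : s 0 0 = 1) (hsneg : s (-1) 0 = 1)
    (hrec : ∀ k : ℕ, 1 ≤ k → k ≤ n →
      (∑ p ∈ Finset.range (n + 1), C (s ((k : ℤ) - 1) p) * X ^ p) * (1 + X * C (d k)) =
        (∑ p ∈ Finset.range (n + 1), C (s (k : ℤ) p) * X ^ p)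
          - X * C (Q (k - 1) * Ring.inverse (1 - Q (k - 1)) * d k) *
            ((∑ p ∈ Finset.range (n + 1), C (s ((k : ℤ) - 1) p) * X ^ p)
              - (∑ p ∈ Finset.range (n + 1), C (s ((k : ℤ) - 2) p) * X ^ p))) :
    ∀ k p : ℕ, p ≤ k → k ≤ n →
      s k p =
        ∑ J ∈ Finset.powersetCard p (Finset.Icc 1 k),
          (∏ j ∈ (Finset.Icc 1 (k - 1)).filter (fun j => j ∈ J ∧ j + 1 ∈ J),
              Ring.inverse (1 - Q j)) * ∏ j ∈ J, d j := by
  have hvan : ∀ k p : ℕ, k ≤ n → k < p → s (k : ℤ) (p : ℤ) = 0 := by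
    intro k p hkn hkp
    apply hvanish k p (by omega) (by exact_mod_cast hkn)
    right
    rw [max_eq_left (by positivity : (0 : ℤ) ≤ (k : ℤ))]
    exact_mod_cast hkp
  have hinv : ∀ k : ℕ, 1 ≤ k → k ≤ n →
      1 + Q (k - 1) * Ring.inverse (1 - Q (k - 1)) = Ring.inverse (1 - Q (k - 1)) := by
    intro k hk1 hkn
    rcases Nat.lt_or_ge k 2 with hk2 | hk2
    · have hk1' : k = 1 := by omega
      subst hk1'
      norm_num [hQ0, Ring.inverse_one]
    · have hu := hQunit (k - 1) (by omega) (by omega)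
      have hc := Ring.mul_inverse_cancel _ hu
      linear_combination -hc
  have key : ∀ k : ℕ, k ≤ n → ∀ p : ℕ, s (k : ℤ) (p : ℤ) = ww_F Q d k p := by
    intro k
    induction k using Nat.strong_induction_on with
    | _ k IH =>
      intro hkn p
      obtain _ | k := k
      · obtain _ | p := p
        · rw [ww_F_zero]; exact_mod_cast hs0
        · rw [ww_F_big Q d (by omega)]
          exact hvan 0 (p + 1) (by omega) (by omega)
      · obtain _ | p := p
        · rw [ww_F_zero]
          exact ww_szero n Q d s hrec hs0 (k + 1) hkn
        · by_cases hbig : k + 1 < p + 1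
          · rw [ww_F_big Q d hbig]
            exact hvan (k + 1) (p + 1) hkn hbig
          · push_neg at hbig
            have hpn : p + 1 ≤ n := by omega
            have hr := ww_srec n Q d s hrec (k + 1) p (by omega) hkn hpn
            have hinvk := hinv (k + 1) (by omega) hkn
            have hc1 : ((k + 1 : ℕ) : ℤ) - 1 = ((k : ℕ) : ℤ) := by push_cast; ring
            rw [hc1] at hr
            obtain _ | k := k
            · -- k + 1 = 1
              rw [show (1 : ℕ) - 1 = 0 from rfl, hQ0] at hr hinvk
              rw [zero_mul, zero_mul, zero_mul, add_zero] at hr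
              rw [hr, IH 0 (by omega) (by omega) (p + 1), IH 0 (by omega) (by omega) p,
                ww_Frec Q d (le_refl 1) (by rw [show (1 : ℕ) - 1 = 0 from rfl, hQ0]; exact hinvk) p]
              simp [hQ0, Ring.inverse_one]
            · -- k + 1 = k' + 2
              have hc2 : ((k + 2 : ℕ) : ℤ) - 2 = ((k : ℕ) : ℤ) := by push_cast; ring
              rw [hc2] at hr
              rw [hr, IH (k + 1) (by omega) (by omega) (p + 1),
                IH (k + 1) (by omega) (by omega) p, IH k (by omega) (by omega) p,
                ww_Frec Q d (show 1 ≤ k + 2 by omega) hinvk p]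
              have e1 : k + 2 - 1 = k + 1 := by omega
              have e2 : k + 2 - 2 = k := by omega
              rw [e1, e2]
              simp only [Nat.add_sub_cancel] at hinvk ⊢
              linear_combination (d (k + 2) * ww_F Q d (k + 1) p) * hinvk
  intro k p hpk hkn
  have h := key k hkn p
  unfold ww_F at h
  exact h
end
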